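/- Let M and N be normal subgroups of a finite group G such that |G : N| is coprime to |M|. Then M ≤ N, and there exists a subgroup H ≤ G such that G = HN and H ∩ M = 1. -/

import Mathlib

/-- A subgroup of order coprime to `N.index` is contained in the normal subgroup `N`. -/
private theorem le_of_coprime_index_card {G : Type*} [Group G] (N K : Subgroup G)
    [N.Normal] (h : Nat.Coprime N.index (Nat.card K)) : K ≤ N := by
  have hd1 : Nat.card (K.map (QuotientGroup.mk' N)) ∣ Nat.card K :=
    Subgroup.card_dvd_of_surjective ((QuotientGroup.mk' N).subgroupMap K)
      ((QuotientGroup.mk' N).subgroupMap_surjective K)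
  have hd2 : Nat.card (K.map (QuotientGroup.mk' N)) ∣ N.index :=
    Subgroup.card_subgroup_dvd_card _
  have h1 : Nat.card (K.map (QuotientGroup.mk' N)) = 1 :=
    Nat.eq_one_of_dvd_coprimes h hd2 hd1
  have h2 : K.map (QuotientGroup.mk' N) = ⊥ := Subgroup.card_eq_one.mp h1
  have h3 : K ≤ (QuotientGroup.mk' N).ker := (Subgroup.map_eq_bot_iff K).mp h2
  rwa [QuotientGroup.ker_mk'] at h3

private theorem aux_pseudo_complement : ∀ (n : ℕ) (G : Type u) [Group G] [Finite G],
    Nat.card G = n → ∀ (M N : Subgroup G), M.Normal → N.Normal →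
    Nat.Coprime N.index (Nat.card M) →
    ∃ H : Subgroup G, H ⊔ N = ⊤ ∧ H ⊓ M = ⊥ := by
  intro n
  induction n using Nat.strong_induction_on with
  | _ n ih =>
    intro G _ _ hcard M N hM hN hco
    haveI := hM
    haveI := hN
    by_cases hT : ∃ T : Subgroup G, T ≠ ⊤ ∧ T ⊔ N = ⊤
    · -- Case 1: a proper subgroup T with TN = G; descend to T
      obtain ⟨T, hTne, hTN⟩ := hT
      have hMT : (M.subgroupOf T).Normal := hM.subgroupOf T
      have hNT : (N.subgroupOf T).Normal := hN.subgroupOf T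
      have hco' : Nat.Coprime (N.subgroupOf T).index (Nat.card (M.subgroupOf T)) := by
        have h1 : (N.subgroupOf T).index ∣ N.index := N.relIndex_dvd_index_of_normal T
        have h2 : Nat.card (M.subgroupOf T) ∣ Nat.card M :=
          Subgroup.card_comap_dvd_of_injective M T.subtype Subtype.coe_injective
        exact (Nat.Coprime.coprime_dvd_left h1 hco).coprime_dvd_right h2
      have hlt : Nat.card T < n := by
        subst hcard
        refine lt_of_le_of_ne (Subgroup.card_le_card_group T) fun h => hTne ?_
        exact Subgroup.eq_top_of_card_eq T h
      obtain ⟨K, hK1, hK2⟩ := ih (Nat.card T) hlt T rfl (M.subgroupOf T) (N.subgroupOf T)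
        hMT hNT hco'
      have hmap : K.map T.subtype ⊔ (N ⊓ T) = T := by
        have := congrArg (Subgroup.map T.subtype) hK1
        rwa [Subgroup.map_sup, Subgroup.subgroupOf_map_subtype, ← MonoidHom.range_eq_map,
          Subgroup.range_subtype] at this
      refine ⟨K.map T.subtype, ?_, ?_⟩
      · rw [eq_top_iff, ← hTN]
        refine sup_le ?_ le_sup_right
        exact le_trans (le_of_eq hmap.symm) (sup_le_sup_left inf_le_left _)
      · rw [eq_bot_iff]
        rintro x ⟨⟨y, hyK, rfl⟩, hxM⟩
        have hy : y ∈ K ⊓ M.subgroupOf T := ⟨hyK, hxM⟩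
        rw [hK2, Subgroup.mem_bot] at hy
        simp [hy]
    · -- Case 2: every T with T ⊔ N = ⊤ equals ⊤; then M = ⊥ and H = ⊤ works
      push_neg at hT
      have htop : ∀ T : Subgroup G, T ⊔ N = ⊤ → T = ⊤ := by
        intro T h
        by_contra hne
        exact hT T hne h
      have hMbot : M = ⊥ := by
        rw [← Subgroup.card_eq_one]
        by_contra hne
        obtain ⟨p, hp, hpdvd⟩ := Nat.exists_prime_and_dvd hne
        haveI : Fact p.Prime := ⟨hp⟩
        obtain ⟨P⟩ := (inferInstance : Nonempty (Sylow p G))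
        -- P ≤ N since N.index is coprime to |M|, hence to p
        have hPN : (P : Subgroup G) ≤ N := by
          refine le_of_coprime_index_card N P ?_
          obtain ⟨k, hk⟩ := IsPGroup.iff_card.mp P.2
          rw [hk]
          have hpN : ¬ p ∣ N.index := fun hd =>
            hp.one_lt.ne' (Nat.eq_one_of_dvd_coprimes hco hd hpdvd)
          exact (((Nat.Prime.coprime_iff_not_dvd hp).mpr hpN).symm.pow_right k)
        -- Frattini argument: P is normal in G
        have hfr : Subgroup.normalizer (P : Set G) ⊔ N = ⊤ :=
          Sylow.normalizer_sup_eq_top' P hPN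
        have hnorm : Subgroup.normalizer (P : Set G) = ⊤ := htop _ hfr
        haveI : (P : Subgroup G).Normal := Subgroup.normalizer_eq_top_iff.mp hnorm
        -- Schur–Zassenhaus: complement K to P
        obtain ⟨K, hK⟩ := Subgroup.exists_right_complement'_of_coprime P.card_coprime_index
        have hKN : K ⊔ N = ⊤ := by
          rw [eq_top_iff, ← hK.sup_eq_top]
          exact sup_le (le_trans hPN le_sup_right) le_sup_left
        have hKtop : K = ⊤ := htop K hKN
        rw [hKtop, Subgroup.isComplement'_top_right] at hK
        exact P.ne_bot_of_dvd_card (hpdvd.trans (Subgroup.card_subgroup_dvd_card M)) hK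
      exact ⟨⊤, by simp, by simp [hMbot]⟩

theorem exists_pseudo_complement_of_coprime {G : Type*} [Group G] [Fintype G]
    (M N : Subgroup G) (hM : M.Normal) (hN : N.Normal)
    (hco : Nat.Coprime N.index (Nat.card M)) :
    M ≤ N ∧ ∃ H : Subgroup G, (∀ g : G, ∃ h ∈ H, ∃ n ∈ N, g = h * n) ∧ H ⊓ M = ⊥ := by
  haveI := hM
  haveI := hN
  obtain ⟨H, hsup, hinf⟩ :=
    aux_pseudo_complement (Nat.card G) G rfl M N hM hN hco
  refine ⟨le_of_coprime_index_card N M hco, H, ?_, hinf⟩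
  intro g
  have hg : g ∈ ((H ⊔ N : Subgroup G) : Set G) := by rw [hsup]; trivial
  rw [Subgroup.mul_normal] at hg
  obtain ⟨h, hh, n, hn, hmul⟩ := hg
  exact ⟨h, hh, n, hn, hmul.symm⟩
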